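/- arXiv:2402.17198 — 2 statements merged into one kernel-verified Lean document; each statement's English description precedes it below -/
import Mathlib

section
/- Let ϖ be a primary prime of Z[i] and k, ℓ ≥ 0 integers. If ℓ = k+1 and k ≡ 3 (mod 4), then g_4(ϖ^k, ϖ^ℓ) = -N(ϖ)^k; if k ≥ ℓ and ℓ ≡ 0 (mod 4), then g_4(ϖ^k, ϖ^ℓ) = φ_K(ϖ^ℓ); and if neither ℓ = k+1 nor (k ≥ ℓ with ℓ ≡ 0 mod 4), then g_4(ϖ^k, ϖ^ℓ) = 0. -/
open scoped ComplexConjugate Classical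

noncomputable section

/-- The imaginary unit in the Gaussian integers `ℤ[i]`. -/
def iZ : GaussianInt := ⟨0, 1⟩

/-- `n` is primary iff `n ≡ 1 (mod (1+i)^3)`. -/
def IsPrimary (n : GaussianInt) : Prop := (1 + iZ) ^ 3 ∣ n - 1

/-- The additive character `ẽ(z) = exp(2πi(z + conj z))`. -/
def eK (z : ℂ) : ℂ := Complex.exp (2 * Real.pi * Complex.I * (z + conj z))

/-- An abstract quartic residue symbol on `ℤ[i]`, characterized by its defining
properties: at odd primes it is the fourth root of unity congruent to
`a^((N ϖ - 1)/4) mod ϖ`, it vanishes when the arguments are not coprime, it is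
extended multiplicatively in the denominator (being `1` at units), and it is
multiplicative in the numerator. -/
structure QuarticResidueSymbol where
  sym : GaussianInt → GaussianInt → GaussianInt
  sym_pow_four : ∀ ϖ a : GaussianInt, Prime ϖ → IsCoprime ϖ 2 → IsCoprime a ϖ →
    sym a ϖ ^ 4 = 1
  sym_spec : ∀ ϖ a : GaussianInt, Prime ϖ → IsCoprime ϖ 2 → IsCoprime a ϖ →
    ϖ ∣ sym a ϖ - a ^ (((Zsqrtd.norm ϖ - 1) / 4).toNat)
  sym_eq_zero : ∀ ϖ a : GaussianInt, Prime ϖ → IsCoprime ϖ 2 → ¬ IsCoprime a ϖ →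
    sym a ϖ = 0
  sym_mul_right : ∀ a c c' : GaussianInt, IsCoprime c 2 → IsCoprime c' 2 →
    sym a (c * c') = sym a c * sym a c'
  sym_unit_right : ∀ (a : GaussianInt) (u : GaussianIntˣ), sym a (u : GaussianInt) = 1
  sym_mul_left : ∀ a b c : GaussianInt, IsCoprime c 2 →
    sym (a * b) c = sym a c * sym b c

/-- An abstract quartic residue symbol together with the associated quartic Gauss sum
`g₄(k,c) = Σ_{x mod c} (x/c)₄ ẽ(kx/c)`, where the sum is over any complete residue
system modulo `c`. -/
structure QuarticGaussSum extends QuarticResidueSymbol where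
  gauss : GaussianInt → GaussianInt → ℂ
  gauss_def : ∀ (k c : GaussianInt), IsCoprime c 2 → ∀ R : Finset GaussianInt,
    (∀ y : GaussianInt, ∃! x, x ∈ R ∧ c ∣ y - x) →
    gauss k c = ∑ x ∈ R, GaussianInt.toComplex (sym x c) *
      eK (GaussianInt.toComplex (k * x) / GaussianInt.toComplex c)



/-- linear equivalence with ℤ² -/
def gEquiv : GaussianInt ≃ₗ[ℤ] (Fin 2 → ℤ) where
  toFun z := ![z.re, z.im]
  invFun f := ⟨f 0, f 1⟩
  map_add' x y := by funext i; fin_cases i <;> simp [Zsqrtd.re_add, Zsqrtd.im_add]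
  map_smul' n x := by
    funext i
    fin_cases i <;> simp [zsmul_eq_mul, Zsqrtd.re_smul, Zsqrtd.im_smul]
  left_inv x := by simp
  right_inv f := by funext i; fin_cases i <;> simp

def gBasis : Module.Basis (Fin 2) ℤ GaussianInt := Module.Basis.ofEquivFun gEquiv

instance : Module.Free ℤ GaussianInt := Module.Free.of_basis gBasis
instance : Module.Finite ℤ GaussianInt := Module.Finite.of_basis gBasis

theorem algebraNorm_eq (z : GaussianInt) : Algebra.norm ℤ z = Zsqrtd.norm z := by
  rw [Algebra.norm_eq_matrix_det gBasis, Matrix.det_fin_two]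
  have h0 : gBasis 0 = 1 := by
    rw [gBasis, Module.Basis.coe_ofEquivFun]
    rfl
  have h1 : gBasis 1 = ⟨0, 1⟩ := by
    rw [gBasis, Module.Basis.coe_ofEquivFun]
    rfl
  have hrepr : ∀ (x : GaussianInt) (i : Fin 2), gBasis.repr x i = gEquiv x i := fun x i => by
    rw [gBasis, Module.Basis.ofEquivFun_repr_apply]
  simp only [Algebra.leftMulMatrix_eq_repr_mul, hrepr, h0, h1]
  show (z * 1).re * (z * ⟨0,1⟩).im - (z * ⟨0,1⟩).re * (z * 1).im = _
  simp [Zsqrtd.re_mul, Zsqrtd.im_mul, Zsqrtd.norm_def]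

theorem card_quot_eq (c : GaussianInt) :
    Nat.card (GaussianInt ⧸ Ideal.span {c}) = (Zsqrtd.norm c).natAbs := by
  rw [← Submodule.cardQuot_apply, ← Ideal.absNorm_apply, Ideal.absNorm_span_singleton,
    algebraNorm_eq]
/-- complete residue system mod c -/
def IsRS (c : GaussianInt) (R : Finset GaussianInt) : Prop :=
  ∀ y : GaussianInt, ∃! x, x ∈ R ∧ c ∣ y - x

def rsRep {c : GaussianInt} {R : Finset GaussianInt} (hR : IsRS c R) (y : GaussianInt) :
    GaussianInt := (hR y).exists.choose

theorem rsRep_mem {c R} (hR : IsRS c R) (y : GaussianInt) : rsRep hR y ∈ R :=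
  (hR y).exists.choose_spec.1

theorem rsRep_dvd {c R} (hR : IsRS c R) (y : GaussianInt) : c ∣ y - rsRep hR y :=
  (hR y).exists.choose_spec.2

theorem rsRep_eq {c R} (hR : IsRS c R) {y x : GaussianInt} (hx : x ∈ R) (hd : c ∣ y - x) :
    x = rsRep hR y :=
  ExistsUnique.unique (hR y) ⟨hx, hd⟩ ⟨rsRep_mem hR y, rsRep_dvd hR y⟩

theorem rsSum_translate {c : GaussianInt} {R : Finset GaussianInt} (hR : IsRS c R)
    (f : GaussianInt → ℂ) (hf : ∀ x y, c ∣ x - y → f x = f y) (t : GaussianInt) :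
    ∑ x ∈ R, f (x + t) = ∑ x ∈ R, f x := by
  apply Finset.sum_nbij' (i := fun x => rsRep hR (x + t)) (j := fun x => rsRep hR (x - t))
  · intro a _; exact rsRep_mem hR _
  · intro a _; exact rsRep_mem hR _
  · intro a ha
    refine (rsRep_eq hR ha ?_).symm
    have h1 : c ∣ (a + t) - rsRep hR (a + t) := rsRep_dvd hR (a + t)
    have : (rsRep hR (a + t) - t) - a = -((a + t) - rsRep hR (a + t)) := by ring
    rw [this]; exact h1.neg_right
  · intro a ha
    refine (rsRep_eq hR ha ?_).symm
    have h1 : c ∣ (a - t) - rsRep hR (a - t) := rsRep_dvd hR (a - t)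
    have : (rsRep hR (a - t) + t) - a = -((a - t) - rsRep hR (a - t)) := by ring
    rw [this]; exact h1.neg_right
  · intro a _
    exact hf _ _ (rsRep_dvd hR (a + t))

theorem rsSum_scale {c : GaussianInt} {R : Finset GaussianInt} (hR : IsRS c R)
    (f : GaussianInt → ℂ) (hf : ∀ x y, c ∣ x - y → f x = f y) {u : GaussianInt}
    (hu : IsCoprime u c) :
    ∑ x ∈ R, f (u * x) = ∑ x ∈ R, f x := by
  obtain ⟨a, b, hab⟩ := hu
  have hv : c ∣ u * a - 1 := ⟨-b, by linear_combination hab⟩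
  apply Finset.sum_nbij' (i := fun x => rsRep hR (u * x)) (j := fun x => rsRep hR (a * x))
  · intro x _; exact rsRep_mem hR _
  · intro x _; exact rsRep_mem hR _
  · intro x hx
    refine (rsRep_eq hR hx ?_).symm
    have h1 : c ∣ (u * x) - rsRep hR (u * x) := rsRep_dvd hR _
    have : a * rsRep hR (u * x) - x
        = -(a * ((u * x) - rsRep hR (u * x))) + (u * a - 1) * x := by ring
    rw [this]
    exact dvd_add ((h1.mul_left a).neg_right) (hv.mul_right x)
  · intro x hx
    refine (rsRep_eq hR hx ?_).symm
    have h1 : c ∣ (a * x) - rsRep hR (a * x) := rsRep_dvd hR _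
    have : u * rsRep hR (a * x) - x
        = -(u * ((a * x) - rsRep hR (a * x))) + (u * a - 1) * x := by ring
    rw [this]
    exact dvd_add ((h1.mul_left u).neg_right) (hv.mul_right x)
  · intro x _
    exact hf _ _ (rsRep_dvd hR _)

theorem rsExists (c : GaussianInt) (hc : c ≠ 0) :
    ∃ R : Finset GaussianInt, IsRS c R ∧ R.card = (Zsqrtd.norm c).natAbs := by
  have hcard : Nat.card (GaussianInt ⧸ Ideal.span {c}) = (Zsqrtd.norm c).natAbs :=
    card_quot_eq c
  have hpos : 0 < Nat.card (GaussianInt ⧸ Ideal.span {c}) := by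
    rw [hcard]
    have : Zsqrtd.norm c ≠ 0 := by
      intro h
      exact hc (by rwa [Zsqrtd.norm_eq_zero_iff (by norm_num) c] at h)
    omega
  haveI : Finite (GaussianInt ⧸ Ideal.span {c}) := (Nat.card_pos_iff.mp hpos).2
  haveI := Fintype.ofFinite (GaussianInt ⧸ Ideal.span {c})
  set s : (GaussianInt ⧸ Ideal.span {c}) → GaussianInt :=
    fun q => (Ideal.Quotient.mk_surjective q).choose with hs
  have hmk : ∀ q, Ideal.Quotient.mk (Ideal.span {c}) (s q) = q :=
    fun q => (Ideal.Quotient.mk_surjective q).choose_spec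
  have hdvd_iff : ∀ x y : GaussianInt,
      (Ideal.Quotient.mk (Ideal.span {c}) x = Ideal.Quotient.mk (Ideal.span {c}) y) ↔
        c ∣ y - x := by
    intro x y
    rw [Ideal.Quotient.eq, Ideal.mem_span_singleton, dvd_sub_comm]
  refine ⟨Finset.image s Finset.univ, ?_, ?_⟩
  · intro y
    refine ⟨s (Ideal.Quotient.mk _ y), ⟨Finset.mem_image_of_mem s (Finset.mem_univ _), ?_⟩, ?_⟩
    · rw [← hdvd_iff, hmk]
    · rintro x ⟨hxR, hxd⟩
      obtain ⟨q, _, rfl⟩ := Finset.mem_image.mp hxR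
      rw [← hdvd_iff, hmk] at hxd
      rw [hxd]
  · rw [Finset.card_image_of_injective _ ?_, Finset.card_univ, ← Nat.card_eq_fintype_card, hcard]
    intro q q' h
    rw [← hmk q, ← hmk q', h]
theorem iZ_mul_iZ : iZ * iZ = -1 := by
  rw [Zsqrtd.ext_iff]
  constructor <;> simp [iZ, Zsqrtd.re_mul, Zsqrtd.im_mul]

theorem two_factor : (1 + iZ) * (1 - iZ) = 2 := by
  linear_combination -iZ_mul_iZ

theorem one_add_iZ_not_unit : ¬ IsUnit (1 + iZ) := by
  intro h
  rw [← Zsqrtd.norm_eq_one_iff] at h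
  have : Zsqrtd.norm (1 + iZ) = 2 := by
    rw [Zsqrtd.norm_def]
    have h1 : (1 + iZ).re = 1 := by simp [iZ]
    have h2 : (1 + iZ).im = 1 := by simp [iZ]
    rw [h1, h2]; norm_num
  rw [this] at h
  norm_num at h

section PrimeFacts

variable {ϖ : GaussianInt} (hp : Prime ϖ) (hpr : IsPrimary ϖ)

include hp hpr in
theorem coprime_two : IsCoprime ϖ 2 := by
  classical
  rw [← EuclideanDomain.gcd_isUnit_iff]
  by_contra hg
  -- gcd is a nonunit divisor of the prime ϖ, hence ϖ ∣ gcd ∣ 2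
  have hgl : EuclideanDomain.gcd ϖ 2 ∣ ϖ := EuclideanDomain.gcd_dvd_left _ _
  obtain ⟨t, ht⟩ := hgl
  have hd2 : ϖ ∣ 2 := by
    rcases hp.irreducible.isUnit_or_isUnit ht with h | h
    · exact absurd h hg
    · obtain ⟨w, hw⟩ := h.exists_right_inv
      have hgw : ϖ * w = EuclideanDomain.gcd ϖ 2 := by
        conv_lhs => rw [ht]
        rw [mul_assoc, hw, mul_one]
      have : ϖ ∣ EuclideanDomain.gcd ϖ 2 := ⟨w, hgw.symm⟩
      exact this.trans (EuclideanDomain.gcd_dvd_right _ _)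
  -- hence ϖ divides (1+i)(1-i), so ϖ ∣ (1+i) (using 1+i = i(1-i))
  have hd : ϖ ∣ (1 + iZ) := by
    rw [← two_factor] at hd2
    rcases hp.dvd_mul.mp hd2 with h | h
    · exact h
    · exact h.trans ⟨iZ, by linear_combination iZ_mul_iZ⟩
  -- but (1+i) divides ϖ - 1
  have hd1 : (1 + iZ) ∣ ϖ - 1 := (dvd_pow_self _ (by norm_num : (3:ℕ) ≠ 0)).trans hpr
  have h1 : ϖ ∣ ϖ - 1 := hd.trans hd1
  have : ϖ ∣ (1 : GaussianInt) := by
    have h2 := dvd_sub (dvd_refl ϖ) h1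
    simpa using h2
  exact hp.not_unit (isUnit_of_dvd_one this)

include hp hpr in
theorem not_dvd_two : ¬ ϖ ∣ 2 := fun hd =>
  hp.not_unit ((coprime_two hp hpr).isUnit_of_dvd' dvd_rfl hd)

include hp hpr in
theorem norm_odd : ¬ (2 : ℤ) ∣ Zsqrtd.norm ϖ := by
  intro h2
  have hn : Zsqrtd.norm ϖ = ϖ.re * ϖ.re + ϖ.im * ϖ.im := by
    rw [Zsqrtd.norm_def]; ring
  have heven : Even (ϖ.re * ϖ.re + ϖ.im * ϖ.im) := by
    obtain ⟨c, hc⟩ := h2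
    exact ⟨c, by linarith⟩
  have hre_im : Even ϖ.re ↔ Even ϖ.im := by
    have h'' := Int.even_add.mp heven
    rwa [Int.even_mul, or_self, Int.even_mul, or_self] at h''
  have hsum : Even (ϖ.re + ϖ.im) := Int.even_add.mpr hre_im
  have hdiff : Even (ϖ.im - ϖ.re) := by
    rcases Int.even_sub.mpr (hre_im.symm) with h; exact h
  obtain ⟨m, hm⟩ := hsum
  obtain ⟨n, hn'⟩ := hdiff
  have hfac : ϖ = (1 + iZ) * ⟨m, n⟩ := by
    rw [Zsqrtd.ext_iff]
    constructor
    · simp [iZ, Zsqrtd.re_mul]; omega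
    · simp [iZ, Zsqrtd.im_mul]; omega
  have : (1 + iZ) ∣ ϖ - 1 := (dvd_pow_self _ (by norm_num : (3:ℕ) ≠ 0)).trans hpr
  have hdvd1 : (1 + iZ) ∣ (1 : GaussianInt) := by
    have h1 : (1 + iZ) ∣ ϖ := ⟨_, hfac⟩
    have h2 := dvd_sub h1 this
    simpa using h2
  exact one_add_iZ_not_unit (isUnit_of_dvd_one hdvd1)

include hp in
theorem norm_gt_one : 1 < Zsqrtd.norm ϖ := by
  have h0 : Zsqrtd.norm ϖ ≠ 0 := fun h => hp.ne_zero (GaussianInt.norm_eq_zero.mp h)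
  have h1 : Zsqrtd.norm ϖ ≠ 1 := by
    intro h
    exact hp.not_unit (Zsqrtd.norm_eq_one_iff.mp (by rw [h]; rfl))
  have hnn := GaussianInt.norm_nonneg ϖ
  omega

include hp hpr in
theorem norm_ge_five : 5 ≤ Zsqrtd.norm ϖ := by
  have h1 := norm_gt_one hp
  have h2 := norm_odd hp hpr
  have h3 : Zsqrtd.norm ϖ ≠ 3 := by
    intro h
    have hn : ϖ.re * ϖ.re + ϖ.im * ϖ.im = 3 := by
      rw [Zsqrtd.norm_def] at h; linarith
    have hmod : ((3 : ZMod 4) = (ϖ.re : ZMod 4)^2 + (ϖ.im : ZMod 4)^2) := by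
      have := congrArg (fun z : ℤ => (z : ZMod 4)) hn
      push_cast at this
      rw [← this]; ring
    have : ∀ a b : ZMod 4, (3 : ZMod 4) ≠ a^2 + b^2 := by decide
    exact this _ _ hmod
  omega

end PrimeFacts
set_option linter.unusedSectionVars false

theorem pow4_cases {u : GaussianInt} (h : u ^ 4 = 1) :
    u = 1 ∨ u = -1 ∨ u = iZ ∨ u = -iZ := by
  have hfac : (u - 1) * (u + 1) * ((u - iZ) * (u + iZ)) = 0 := by
    linear_combination h + (1 - u^2) * iZ_mul_iZ
  rcases mul_eq_zero.mp hfac with h1 | h2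
  · rcases mul_eq_zero.mp h1 with h | h
    · exact Or.inl (by linear_combination h)
    · exact Or.inr (Or.inl (by linear_combination h))
  · rcases mul_eq_zero.mp h2 with h | h
    · exact Or.inr (Or.inr (Or.inl (by linear_combination h)))
    · exact Or.inr (Or.inr (Or.inr (by linear_combination h)))

theorem root_sep {ϖ : GaussianInt} (hp : Prime ϖ) (hpr : IsPrimary ϖ)
    {u v : GaussianInt} (hu : u ^ 4 = 1) (hv : v ^ 4 = 1) (hd : ϖ ∣ u - v) : u = v := by
  have hnd2 := not_dvd_two hp hpr
  by_contra hne
  apply hnd2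
  apply hd.trans
  have key : u - v ∣ 2 := by
    rcases pow4_cases hu with rfl | rfl | rfl | rfl <;>
      rcases pow4_cases hv with rfl | rfl | rfl | rfl
    · exact absurd rfl hne
    · exact ⟨1, by ring⟩
    · exact ⟨1 + iZ, by linear_combination iZ_mul_iZ⟩
    · exact ⟨1 - iZ, by linear_combination iZ_mul_iZ⟩
    · exact ⟨-1, by ring⟩
    · exact absurd rfl hne
    · exact ⟨-1 + iZ, by linear_combination iZ_mul_iZ⟩
    · exact ⟨-1 - iZ, by linear_combination iZ_mul_iZ⟩
    · exact ⟨-1 - iZ, by linear_combination iZ_mul_iZ⟩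
    · exact ⟨1 - iZ, by linear_combination iZ_mul_iZ⟩
    · exact absurd rfl hne
    · exact ⟨-iZ, by linear_combination 2 * iZ_mul_iZ⟩
    · exact ⟨-1 + iZ, by linear_combination iZ_mul_iZ⟩
    · exact ⟨1 + iZ, by linear_combination iZ_mul_iZ⟩
    · exact ⟨iZ, by linear_combination 2 * iZ_mul_iZ⟩
    · exact absurd rfl hne
  exact key

theorem coprime_of_not_dvd {ϖ a : GaussianInt} (hp : Prime ϖ) (h : ¬ ϖ ∣ a) :
    IsCoprime a ϖ := by
  classical
  rw [← EuclideanDomain.gcd_isUnit_iff]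
  have hgr : EuclideanDomain.gcd a ϖ ∣ ϖ := EuclideanDomain.gcd_dvd_right _ _
  obtain ⟨t, ht⟩ := hgr
  rcases hp.irreducible.isUnit_or_isUnit ht with hg | hg
  · exact hg
  · exfalso
    obtain ⟨w, hw⟩ := hg.exists_right_inv
    have hgw : ϖ * w = EuclideanDomain.gcd a ϖ := by
      conv_lhs => rw [ht]
      rw [mul_assoc, hw, mul_one]
    exact h (Dvd.dvd.trans ⟨w, hgw.symm⟩ (EuclideanDomain.gcd_dvd_left _ _))

theorem not_coprime_of_dvd {ϖ a : GaussianInt} (hp : Prime ϖ) (h : ϖ ∣ a) :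
    ¬ IsCoprime a ϖ := fun hc => hp.not_unit (hc.isUnit_of_dvd' h dvd_rfl)

/-! ### eK lemmas -/

theorem eK_add (z w : ℂ) : eK (z + w) = eK z * eK w := by
  rw [eK, eK, eK, ← Complex.exp_add]
  congr 1
  rw [map_add]
  ring

theorem eK_int (a : GaussianInt) : eK (GaussianInt.toComplex a) = 1 := by
  rw [eK, Complex.add_conj]
  have : (2 * Real.pi * Complex.I) * ((2 * (GaussianInt.toComplex a).re : ℝ) : ℂ)
      = ((2 * a.re : ℤ) : ℂ) * (2 * Real.pi * Complex.I) := by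
    push_cast [← GaussianInt.intCast_re]
    ring
  rw [this, Complex.exp_int_mul_two_pi_mul_I]

theorem eK_div_add (c a t : GaussianInt) (hc : c ≠ 0) :
    eK (GaussianInt.toComplex (a + c * t) / GaussianInt.toComplex c)
      = eK (GaussianInt.toComplex a / GaussianInt.toComplex c) := by
  have hcc : GaussianInt.toComplex c ≠ 0 := by
    rw [Ne, GaussianInt.toComplex_eq_zero]; exact hc
  have : GaussianInt.toComplex (a + c * t) / GaussianInt.toComplex c
      = GaussianInt.toComplex a / GaussianInt.toComplex c + GaussianInt.toComplex t := by
    field_simp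
    rw [map_add, map_mul]
  rw [this, eK_add, eK_int, mul_one]
theorem exists_eK_ne_one {ϖ : GaussianInt} (hp : Prime ϖ) (hpr : IsPrimary ϖ) :
    ∃ t : GaussianInt, eK (GaussianInt.toComplex t / GaussianInt.toComplex ϖ) ≠ 1 := by
  by_contra hcon
  push_neg at hcon
  set N : ℤ := Zsqrtd.norm ϖ with hN
  have hN1 : 1 < N := norm_gt_one hp
  have hN0 : (N : ℝ) ≠ 0 := by
    simp only [Ne, Int.cast_eq_zero]; omega
  have key : ∀ t : GaussianInt, N ∣ 2 * (t.re * ϖ.re + t.im * ϖ.im) := by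
    intro t
    have h1 := hcon t
    rw [eK, Complex.add_conj, Complex.exp_eq_one_iff] at h1
    obtain ⟨n, hn⟩ := h1
    have h2πI : (2 * (Real.pi : ℂ) * Complex.I) ≠ 0 := by
      simp [Real.pi_ne_zero, Complex.I_ne_zero]
    rw [mul_comm ((2:ℂ) * Real.pi * Complex.I)] at hn
    have h2 : ((2 * (GaussianInt.toComplex t / GaussianInt.toComplex ϖ).re : ℝ) : ℂ)
        = (n : ℂ) := mul_right_cancel₀ h2πI hn
    have h3 : (2 * (GaussianInt.toComplex t / GaussianInt.toComplex ϖ).re : ℝ) = (n : ℝ) := by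
      exact_mod_cast h2
    have hre : (GaussianInt.toComplex t / GaussianInt.toComplex ϖ).re
        = ((t.re * ϖ.re + t.im * ϖ.im : ℤ) : ℝ) / (N : ℝ) := by
      rw [Complex.div_re]
      rw [← GaussianInt.intCast_real_norm]
      push_cast [← GaussianInt.intCast_re, ← GaussianInt.intCast_im]
      ring
    rw [hre] at h3
    have h4 : (2 * (t.re * ϖ.re + t.im * ϖ.im : ℤ) : ℝ) = (n : ℝ) * (N : ℝ) := by
      field_simp at h3
      push_cast
      push_cast at h3
      linarith
    have h5 : 2 * (t.re * ϖ.re + t.im * ϖ.im) = n * N := by exact_mod_cast h4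
    exact ⟨n, by linarith⟩
  have hre2 : N ∣ 2 * ϖ.re := by
    have := key 1
    simpa using this
  have him2 : N ∣ 2 * ϖ.im := by
    have := key iZ
    have h0 : (iZ.re : ℤ) = 0 := rfl
    have h1 : (iZ.im : ℤ) = 1 := rfl
    rw [h0, h1] at this
    simpa using this
  have hodd : ¬ (2:ℤ) ∣ N := norm_odd hp hpr
  have hco : IsCoprime (N : ℤ) 2 := by
    rw [Int.isCoprime_iff_gcd_eq_one]
    have hoddabs : Odd N.natAbs := by
      rw [Int.natAbs_odd, Int.odd_iff]
      omega
    have : Nat.gcd N.natAbs 2 = 1 := Nat.coprime_two_right.mpr hoddabs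
    simpa [Int.gcd] using this
  have hre : N ∣ ϖ.re := by
    rcases hco.dvd_of_dvd_mul_left (show N ∣ 2 * ϖ.re from hre2) with h
    exact h
  have him : N ∣ ϖ.im := by
    exact hco.dvd_of_dvd_mul_left him2
  obtain ⟨s, hs⟩ := hre
  obtain ⟨w, hw⟩ := him
  have hnorm : N = ϖ.re * ϖ.re + ϖ.im * ϖ.im := by
    rw [hN, Zsqrtd.norm_def]; ring
  have : N * 1 = N * (N * (s * s + w * w)) := by
    linear_combination hnorm + (ϖ.re + N * s) * hs + (ϖ.im + N * w) * hw
  have h1 : (1 : ℤ) = N * (s * s + w * w) := mul_left_cancel₀ (by omega) this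
  have : N ∣ 1 := ⟨_, h1⟩
  have := Int.le_of_dvd one_pos this
  omega
section SymFacts

variable (S : QuarticGaussSum) {ϖ : GaussianInt} (hp : Prime ϖ) (hpr : IsPrimary ϖ)

include hp hpr in
theorem sym_congr {a b : GaussianInt} (hd : ϖ ∣ a - b) : S.sym a ϖ = S.sym b ϖ := by
  have h2 := coprime_two hp hpr
  by_cases hca : IsCoprime a ϖ
  · have hcb : IsCoprime b ϖ := by
      obtain ⟨t, ht⟩ := hd
      have hb : b = a + ϖ * (-t) := by linear_combination -ht
      rw [hb]
      exact hca.add_mul_left_left (-t)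
    have h1 := S.sym_spec ϖ a hp h2 hca
    have h2' := S.sym_spec ϖ b hp h2 hcb
    set e := ((Zsqrtd.norm ϖ - 1) / 4).toNat
    have h3 : ϖ ∣ a ^ e - b ^ e := hd.trans (sub_dvd_pow_sub_pow a b e)
    have h4 : ϖ ∣ S.sym a ϖ - S.sym b ϖ := by
      have heq : S.sym a ϖ - S.sym b ϖ
          = (S.sym a ϖ - a ^ e) - (S.sym b ϖ - b ^ e) + (a ^ e - b ^ e) := by ring
      rw [heq]
      exact dvd_add (dvd_sub h1 h2') h3
    exact root_sep hp hpr (S.sym_pow_four ϖ a hp h2 hca) (S.sym_pow_four ϖ b hp h2 hcb) h4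
  · have hcb : ¬ IsCoprime b ϖ := by
      intro hcb
      apply hca
      obtain ⟨t, ht⟩ := hd
      have ha : a = b + ϖ * t := by linear_combination ht
      rw [ha]
      exact hcb.add_mul_left_left t
    rw [S.sym_eq_zero ϖ a hp h2 hca, S.sym_eq_zero ϖ b hp h2 hcb]

include hp hpr in
theorem sym_pow (a : GaussianInt) (ℓ : ℕ) : S.sym a (ϖ ^ ℓ) = (S.sym a ϖ) ^ ℓ := by
  induction ℓ with
  | zero =>
    simpa using S.sym_unit_right a 1
  | succ j ih =>
    rw [pow_succ, S.sym_mul_right a (ϖ ^ j) ϖ ((coprime_two hp hpr).pow_left)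
      (coprime_two hp hpr), ih, pow_succ]

include hp hpr in
theorem exists_sym_sq_neg_one :
    ∃ u : GaussianInt, IsCoprime u ϖ ∧ (S.sym u ϖ) ^ 2 = -1 := by
  classical
  by_contra hcon
  push_neg at hcon
  have h2 := coprime_two hp hpr
  have hsq : ∀ u : GaussianInt, IsCoprime u ϖ → (S.sym u ϖ) ^ 2 = 1 := by
    intro u hu
    have h4 := S.sym_pow_four ϖ u hp h2 hu
    have : ((S.sym u ϖ) ^ 2 - 1) * ((S.sym u ϖ) ^ 2 + 1) = 0 := by
      linear_combination h4
    rcases mul_eq_zero.mp this with h | h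
    · linear_combination h
    · exact absurd (by linear_combination h) (hcon u hu)
  set N : ℤ := Zsqrtd.norm ϖ with hN
  set e : ℕ := ((N - 1) / 4).toNat with he
  have hN5 : 5 ≤ N := norm_ge_five hp hpr
  have hdvd : ∀ u : GaussianInt, IsCoprime u ϖ → ϖ ∣ u ^ (2 * e) - 1 := by
    intro u hu
    have h1 := S.sym_spec ϖ u hp h2 hu
    have h3 : ϖ ∣ (S.sym u ϖ) ^ 2 - (u ^ e) ^ 2 :=
      h1.trans (sub_dvd_pow_sub_pow _ _ 2)
    rw [hsq u hu] at h3
    have : u ^ (2 * e) - 1 = -((1 : GaussianInt) - (u ^ e) ^ 2) := by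
      rw [← pow_mul]; ring_nf
    rw [this]
    exact h3.neg_right
  -- quotient field
  have hmax : (Ideal.span {ϖ}).IsMaximal :=
    PrincipalIdealRing.isMaximal_of_irreducible hp.irreducible
  haveI := hmax
  letI : Field (GaussianInt ⧸ Ideal.span {ϖ}) := Ideal.Quotient.field _
  have hcard : Nat.card (GaussianInt ⧸ Ideal.span {ϖ}) = N.natAbs := card_quot_eq ϖ
  have hpos : 0 < Nat.card (GaussianInt ⧸ Ideal.span {ϖ}) := by omega
  haveI : Finite (GaussianInt ⧸ Ideal.span {ϖ}) := (Nat.card_pos_iff.mp hpos).2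
  haveI := Fintype.ofFinite (GaussianInt ⧸ Ideal.span {ϖ})
  obtain ⟨g, hg⟩ := IsCyclic.exists_generator (α := (GaussianInt ⧸ Ideal.span {ϖ})ˣ)
  obtain ⟨u, hu⟩ := Ideal.Quotient.mk_surjective (g : GaussianInt ⧸ Ideal.span {ϖ})
  have hund : ¬ ϖ ∣ u := by
    intro hd
    have : Ideal.Quotient.mk (Ideal.span {ϖ}) u = 0 := by
      rw [Ideal.Quotient.eq_zero_iff_mem, Ideal.mem_span_singleton]
      exact hd
    rw [hu] at this
    exact Units.ne_zero g this
  have hucop : IsCoprime u ϖ := coprime_of_not_dvd hp hund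
  have hu2e : (g : GaussianInt ⧸ Ideal.span {ϖ}) ^ (2 * e) = 1 := by
    have hd := hdvd u hucop
    have : Ideal.Quotient.mk (Ideal.span {ϖ}) (u ^ (2 * e) - 1) = 0 := by
      rw [Ideal.Quotient.eq_zero_iff_mem, Ideal.mem_span_singleton]
      exact hd
    rw [RingHom.map_sub, RingHom.map_pow, RingHom.map_one, sub_eq_zero, hu] at this
    exact this
  have hg2e : g ^ (2 * e) = 1 := Units.ext (by push_cast [hu2e]; simp [hu2e])
  have horder : orderOf g = Nat.card (GaussianInt ⧸ Ideal.span {ϖ})ˣ :=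
    orderOf_eq_card_of_forall_mem_zpowers hg
  have hdvd2 : Nat.card (GaussianInt ⧸ Ideal.span {ϖ})ˣ ∣ 2 * e := by
    rw [← horder]
    exact orderOf_dvd_of_pow_eq_one hg2e
  have hcardu : Nat.card (GaussianInt ⧸ Ideal.span {ϖ})ˣ
      = Nat.card (GaussianInt ⧸ Ideal.span {ϖ}) - 1 := by
    exact Nat.card_units (α := GaussianInt ⧸ Ideal.span {ϖ})
  have hcardF : Nat.card (GaussianInt ⧸ Ideal.span {ϖ}) = N.natAbs := hcard
  have he1 : (e : ℤ) = (N - 1) / 4 := by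
    rw [he]
    exact Int.toNat_of_nonneg (by omega)
  have h2epos : 0 < 2 * e := by omega
  have hle := Nat.le_of_dvd h2epos hdvd2
  rw [hcardu, hcardF] at hle
  omega
end SymFacts
theorem rs_lift {ϖ : GaussianInt} (hϖ0 : ϖ ≠ 0) {j : ℕ} {R₁ R₂ : Finset GaussianInt}
    (hR₁ : IsRS ϖ R₁) (hR₂ : IsRS (ϖ ^ j) R₂) :
    IsRS (ϖ ^ (j + 1)) ((R₁ ×ˢ R₂).image fun p => p.1 + ϖ * p.2) ∧
    ∀ f : GaussianInt → ℂ,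
      (∑ x ∈ (R₁ ×ˢ R₂).image (fun p => p.1 + ϖ * p.2), f x)
        = ∑ p ∈ R₁ ×ˢ R₂, f (p.1 + ϖ * p.2) := by
  have hinj : ∀ p ∈ R₁ ×ˢ R₂, ∀ q ∈ R₁ ×ˢ R₂,
      p.1 + ϖ * p.2 = q.1 + ϖ * q.2 → p = q := by
    rintro ⟨y, z⟩ hp ⟨y', z'⟩ hq h
    simp only [Finset.mem_product] at hp hq
    have hd : ϖ ∣ y - y' := ⟨z' - z, by linear_combination h⟩
    have hy : y = y' := by
      have e1 : y = rsRep hR₁ y := rsRep_eq hR₁ hp.1 (by simp)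
      have e2 : y' = rsRep hR₁ y := rsRep_eq hR₁ hq.1 hd
      rw [e1, e2]
    have hz : z = z' := by
      apply mul_left_cancel₀ hϖ0
      have : ϖ * z = y' - y + ϖ * z' := by linear_combination h
      rw [this, hy]
      ring
    simp [hy, hz]
  constructor
  · intro w
    set y := rsRep hR₁ w with hy
    obtain ⟨t, ht⟩ := rsRep_dvd hR₁ w
    set z := rsRep hR₂ t with hz
    obtain ⟨s, hs⟩ := rsRep_dvd hR₂ t
    refine ⟨y + ϖ * z, ⟨?_, ?_⟩, ?_⟩
    · exact Finset.mem_image.mpr ⟨(y, z),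
        Finset.mem_product.mpr ⟨rsRep_mem hR₁ w, rsRep_mem hR₂ t⟩, rfl⟩
    · exact ⟨s, by rw [pow_succ]; linear_combination ht + ϖ * hs⟩
    · rintro x' ⟨hx'm, hx'd⟩
      obtain ⟨⟨y', z'⟩, hmem, rfl⟩ := Finset.mem_image.mp hx'm
      obtain ⟨hy'm, hz'm⟩ := Finset.mem_product.mp hmem
      obtain ⟨s', hs'⟩ := hx'd
      have hϖd : ϖ ∣ w - (y' + ϖ * z') :=
        (dvd_pow_self ϖ (Nat.succ_ne_zero j)).trans ⟨s', hs'⟩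
      have hdy' : ϖ ∣ w - y' := by
        obtain ⟨c, hc⟩ := hϖd
        exact ⟨c + z', by linear_combination hc⟩
      have hy'eq : y' = y := rsRep_eq hR₁ hy'm hdy'
      subst hy'eq
      have hcan : ϖ * (t - z') = ϖ * (ϖ ^ j * s') := by
        rw [pow_succ] at hs'
        linear_combination hs' - ht
      have hdz' : ϖ ^ j ∣ t - z' := ⟨s', mul_left_cancel₀ hϖ0 hcan⟩
      have : z' = z := rsRep_eq hR₂ hz'm hdz'
      rw [this]
  · intro f
    exact Finset.sum_image hinj
theorem norm_pow' (ϖ : GaussianInt) (n : ℕ) :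
    Zsqrtd.norm (ϖ ^ n) = (Zsqrtd.norm ϖ) ^ n := by
  induction n with
  | zero => simp [Zsqrtd.norm_one]
  | succ m ih => rw [pow_succ, Zsqrtd.norm_mul, ih, pow_succ]

/-- Evaluation of quartic Gauss sums at prime powers: for a primary prime `ϖ`,
if `ℓ = k+1` and `k ≡ 3 (mod 4)` then `g₄(ϖ^k, ϖ^ℓ) = -N(ϖ)^k`;
if `k ≥ ℓ` and `ℓ ≡ 0 (mod 4)` then `g₄(ϖ^k, ϖ^ℓ) = φ_K(ϖ^ℓ)`
(the number of reduced residues modulo `ϖ^ℓ`); otherwise `g₄(ϖ^k, ϖ^ℓ) = 0`. -/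
theorem stmt11 (S : QuarticGaussSum) (ϖ : GaussianInt)
    (hp : Prime ϖ) (hpr : IsPrimary ϖ) (k ℓ : ℕ) :
    (ℓ = k + 1 → k % 4 = 3 →
      S.gauss (ϖ ^ k) (ϖ ^ ℓ) = -((Zsqrtd.norm ϖ : ℂ)) ^ k) ∧
    (ℓ ≤ k → ℓ % 4 = 0 →
      ∀ R : Finset GaussianInt, (∀ y : GaussianInt, ∃! x, x ∈ R ∧ ϖ ^ ℓ ∣ y - x) →
        S.gauss (ϖ ^ k) (ϖ ^ ℓ) =
          ((R.filter (fun d => IsCoprime d (ϖ ^ ℓ))).card : ℂ)) ∧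
    (¬ (ℓ = k + 1) → ¬ (ℓ ≤ k ∧ ℓ % 4 = 0) →
      S.gauss (ϖ ^ k) (ϖ ^ ℓ) = 0) := by
  classical
  have hϖ2 : IsCoprime ϖ 2 := coprime_two hp hpr
  have hϖ0 : ϖ ≠ 0 := hp.ne_zero
  have hA0 : GaussianInt.toComplex ϖ ≠ 0 := by
    rw [Ne, GaussianInt.toComplex_eq_zero]; exact hϖ0
  -- the symbol at `ϖ^m` is the coprimality indicator when `m % 4 = 0`
  have hind : ∀ m : ℕ, m % 4 = 0 → ∀ x : GaussianInt,
      GaussianInt.toComplex (S.sym x (ϖ ^ m)) =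
        if IsCoprime x (ϖ ^ m) then 1 else 0 := by
    intro m hm x
    rw [sym_pow S hp hpr]
    by_cases hcx : IsCoprime x ϖ
    · rw [if_pos (IsCoprime.pow_right hcx)]
      have h4 : 4 ∣ m := Nat.dvd_of_mod_eq_zero hm
      rw [← Nat.mul_div_cancel' h4, pow_mul, S.sym_pow_four ϖ x hp hϖ2 hcx, one_pow, map_one]
    · by_cases hm0 : m = 0
      · subst hm0
        rw [pow_zero, pow_zero, if_pos (isCoprime_one_right), map_one]
      · rw [if_neg (fun hc => hcx (IsCoprime.of_isCoprime_of_dvd_right hc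
          (dvd_pow_self ϖ hm0))), S.sym_eq_zero ϖ x hp hϖ2 hcx, zero_pow hm0, map_zero]
  -- the eK factor is 1 when the exponent in the denominator is ≤ k
  have heK1 : ∀ m : ℕ, m ≤ k → ∀ x : GaussianInt,
      eK (GaussianInt.toComplex (ϖ ^ k * x) / GaussianInt.toComplex (ϖ ^ m)) = 1 := by
    intro m hm x
    have hsplit : ϖ ^ k * x = ϖ ^ m * (ϖ ^ (k - m) * x) := by
      rw [← mul_assoc, ← pow_add, Nat.add_sub_cancel' hm]
    rw [hsplit, map_mul, mul_div_cancel_left₀ _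
      (by rw [Ne, GaussianInt.toComplex_eq_zero]; exact pow_ne_zero m hϖ0), eK_int]
  -- full additive character sum over a residue system mod ϖ vanishes
  have hful : ∀ R₁ : Finset GaussianInt, IsRS ϖ R₁ →
      ∑ y ∈ R₁, eK (GaussianInt.toComplex y / GaussianInt.toComplex ϖ) = 0 := by
    intro R₁ hR₁
    obtain ⟨t, ht⟩ := exists_eK_ne_one hp hpr
    have hf : ∀ x y : GaussianInt, ϖ ∣ x - y →
        eK (GaussianInt.toComplex x / GaussianInt.toComplex ϖ)
          = eK (GaussianInt.toComplex y / GaussianInt.toComplex ϖ) := by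
      rintro x y ⟨s, hs⟩
      have hx : x = y + ϖ * s := by linear_combination hs
      rw [hx, eK_div_add ϖ y s hϖ0]
    have h1 := rsSum_translate hR₁ _ hf t
    have h2 : ∀ x : GaussianInt,
        eK (GaussianInt.toComplex (x + t) / GaussianInt.toComplex ϖ)
          = eK (GaussianInt.toComplex x / GaussianInt.toComplex ϖ)
            * eK (GaussianInt.toComplex t / GaussianInt.toComplex ϖ) := by
      intro x; rw [map_add, add_div, eK_add]
    rw [Finset.sum_congr rfl (fun x _ => h2 x), ← Finset.sum_mul] at h1
    have h3 : (∑ y ∈ R₁, eK (GaussianInt.toComplex y / GaussianInt.toComplex ϖ))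
        * (eK (GaussianInt.toComplex t / GaussianInt.toComplex ϖ) - 1) = 0 := by
      linear_combination h1
    rcases mul_eq_zero.mp h3 with h | h
    · exact h
    · exact absurd (by linear_combination h) ht
  refine ⟨?_, ?_, ?_⟩
  · -- Clause 1 : ℓ = k + 1, k % 4 = 3
    intro hl hk4
    subst hl
    have hsuccmod : (k + 1) % 4 = 0 := by omega
    obtain ⟨R₁, hR₁, hc₁⟩ := rsExists ϖ hϖ0
    obtain ⟨R₂, hR₂, hc₂⟩ := rsExists (ϖ ^ k) (pow_ne_zero k hϖ0)
    obtain ⟨hRS, hsum⟩ := rs_lift hϖ0 hR₁ hR₂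
    rw [S.gauss_def (ϖ ^ k) (ϖ ^ (k + 1)) (hϖ2.pow_left) _ hRS, hsum, Finset.sum_product]
    have hterm : ∀ y ∈ R₁, ∀ z ∈ R₂,
        GaussianInt.toComplex (S.sym (y + ϖ * z) (ϖ ^ (k + 1)))
            * eK (GaussianInt.toComplex (ϖ ^ k * (y + ϖ * z))
                / GaussianInt.toComplex (ϖ ^ (k + 1)))
          = (if IsCoprime y (ϖ ^ (k + 1)) then 1 else 0)
            * eK (GaussianInt.toComplex y / GaussianInt.toComplex ϖ) := by
      intro y _ z _
      have hcongr : S.sym (y + ϖ * z) ϖ = S.sym y ϖ :=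
        sym_congr S hp hpr (⟨z, by ring⟩ : ϖ ∣ (y + ϖ * z) - y)
      have hsym : S.sym (y + ϖ * z) (ϖ ^ (k + 1)) = S.sym y (ϖ ^ (k + 1)) := by
        rw [sym_pow S hp hpr, sym_pow S hp hpr, hcongr]
      rw [hsym, hind (k + 1) hsuccmod y]
      congr 1
      have heq1 : ϖ ^ k * (y + ϖ * z) = ϖ ^ k * y + ϖ ^ (k + 1) * z := by
        rw [pow_succ]; ring
      rw [heq1, eK_div_add (ϖ ^ (k + 1)) (ϖ ^ k * y) z (pow_ne_zero _ hϖ0)]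
      congr 1
      rw [map_mul, map_pow, map_pow, pow_succ]
      exact mul_div_mul_left _ _ (pow_ne_zero k hA0)
    rw [Finset.sum_congr rfl (fun y hy => Finset.sum_congr rfl (fun z hz => hterm y hy z hz))]
    simp only [Finset.sum_const, nsmul_eq_mul]
    rw [← Finset.mul_sum]
    have hinner : ∑ y ∈ R₁, (if IsCoprime y (ϖ ^ (k + 1)) then (1:ℂ) else 0)
        * eK (GaussianInt.toComplex y / GaussianInt.toComplex ϖ) = -1 := by
      have hsplit : ∀ y ∈ R₁, (if IsCoprime y (ϖ ^ (k + 1)) then (1:ℂ) else 0)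
          * eK (GaussianInt.toComplex y / GaussianInt.toComplex ϖ)
          = eK (GaussianInt.toComplex y / GaussianInt.toComplex ϖ)
            - (if ϖ ∣ y then eK (GaussianInt.toComplex y / GaussianInt.toComplex ϖ)
                else 0) := by
        intro y _
        by_cases hcy : IsCoprime y ϖ
        · have hnd : ¬ ϖ ∣ y := fun hd => not_coprime_of_dvd hp hd hcy
          rw [if_pos (hcy.pow_right), if_neg hnd, one_mul, sub_zero]
        · have hd : ϖ ∣ y := by
            by_contra hnd
            exact hcy (coprime_of_not_dvd hp hnd)
          have hnc : ¬ IsCoprime y (ϖ ^ (k + 1)) := fun hc =>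
            hcy (IsCoprime.of_isCoprime_of_dvd_right hc (dvd_pow_self ϖ (Nat.succ_ne_zero k)))
          rw [if_neg hnc, if_pos hd, zero_mul, sub_self]
      rw [Finset.sum_congr rfl hsplit, Finset.sum_sub_distrib, hful R₁ hR₁]
      have hy₀ : ϖ ∣ rsRep hR₁ 0 := by
        have h := rsRep_dvd hR₁ 0
        rwa [zero_sub, dvd_neg] at h
      have hone : eK (GaussianInt.toComplex (rsRep hR₁ 0) / GaussianInt.toComplex ϖ) = 1 := by
        obtain ⟨s, hs⟩ := hy₀
        rw [hs, map_mul, mul_div_cancel_left₀ _ hA0, eK_int]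
      rw [Finset.sum_eq_single (rsRep hR₁ 0)
        (fun b hb hne => if_neg (fun hd => hne (rsRep_eq hR₁ hb
          (by rw [zero_sub]; exact hd.neg_right))))
        (fun h => absurd (rsRep_mem hR₁ 0) h), if_pos hy₀, hone]
      ring
    rw [hinner, hc₂, norm_pow', Int.natAbs_pow]
    push_cast [GaussianInt.natCast_natAbs_norm]
    ring
  · -- Clause 2 : ℓ ≤ k, ℓ % 4 = 0
    intro hk hl4 R hR
    rw [S.gauss_def (ϖ ^ k) (ϖ ^ ℓ) (hϖ2.pow_left) R hR]
    have hterm : ∀ x ∈ R,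
        GaussianInt.toComplex (S.sym x (ϖ ^ ℓ))
            * eK (GaussianInt.toComplex (ϖ ^ k * x) / GaussianInt.toComplex (ϖ ^ ℓ))
          = if IsCoprime x (ϖ ^ ℓ) then (1:ℂ) else 0 := by
      intro x _
      rw [heK1 ℓ hk x, mul_one, hind ℓ hl4 x]
    rw [Finset.sum_congr rfl hterm, Finset.sum_boole]
  · -- Clause 3
    intro hne hnot
    by_cases hle : ℓ ≤ k
    · -- then ℓ % 4 ≠ 0 and ℓ ≥ 1 : multiplicative character sum vanishes
      have hl4 : ℓ % 4 ≠ 0 := fun h => hnot ⟨hle, h⟩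
      have hl0 : ℓ ≠ 0 := fun h => hl4 (by simp [h])
      obtain ⟨R, hR, _⟩ := rsExists (ϖ ^ ℓ) (pow_ne_zero ℓ hϖ0)
      rw [S.gauss_def (ϖ ^ k) (ϖ ^ ℓ) (hϖ2.pow_left) R hR]
      have hterm : ∀ x ∈ R,
          GaussianInt.toComplex (S.sym x (ϖ ^ ℓ))
              * eK (GaussianInt.toComplex (ϖ ^ k * x) / GaussianInt.toComplex (ϖ ^ ℓ))
            = GaussianInt.toComplex (S.sym x (ϖ ^ ℓ)) := by
        intro x _
        rw [heK1 ℓ hle x, mul_one]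
      rw [Finset.sum_congr rfl hterm]
      obtain ⟨u, hucop, hu2⟩ := exists_sym_sq_neg_one S hp hpr
      have hf : ∀ x y : GaussianInt, ϖ ^ ℓ ∣ x - y →
          GaussianInt.toComplex (S.sym x (ϖ ^ ℓ))
            = GaussianInt.toComplex (S.sym y (ϖ ^ ℓ)) := by
        intro x y hd
        rw [sym_pow S hp hpr, sym_pow S hp hpr,
          sym_congr S hp hpr ((dvd_pow_self ϖ hl0).trans hd)]
      have hscale := rsSum_scale hR _ hf (IsCoprime.pow_right hucop)
      have hmul : ∀ x : GaussianInt,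
          GaussianInt.toComplex (S.sym (u * x) (ϖ ^ ℓ))
            = GaussianInt.toComplex (S.sym u (ϖ ^ ℓ))
              * GaussianInt.toComplex (S.sym x (ϖ ^ ℓ)) := by
        intro x
        rw [S.sym_mul_left u x (ϖ ^ ℓ) (hϖ2.pow_left), map_mul]
      rw [Finset.sum_congr rfl (fun x _ => hmul x), ← Finset.mul_sum] at hscale
      -- the scaling factor is ≠ 1
      have hneg1 : (-1 : GaussianInt) ≠ 1 := by
        intro h
        have h' := congrArg Zsqrtd.re h
        simp at h'
      have h4 : (S.sym u ϖ) ^ 4 = 1 := by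
        have : (S.sym u ϖ) ^ 4 = ((S.sym u ϖ) ^ 2) ^ 2 := by ring
        rw [this, hu2]; ring
      have hχl : (S.sym u ϖ) ^ ℓ ≠ 1 := by
        have hdecomp : (S.sym u ϖ) ^ ℓ = (S.sym u ϖ) ^ (ℓ % 4) := by
          conv_lhs => rw [← Nat.div_add_mod ℓ 4]
          rw [pow_add, pow_mul, h4, one_pow, one_mul]
        rw [hdecomp]
        have hr : ℓ % 4 = 1 ∨ ℓ % 4 = 2 ∨ ℓ % 4 = 3 := by omega
        rcases hr with hr | hr | hr <;> rw [hr]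
        · intro h
          apply hneg1
          rw [← hu2]
          linear_combination (S.sym u ϖ + 1) * h
        · rw [hu2]
          exact fun h => hneg1 h
        · intro h
          have hχ1 : S.sym u ϖ = 1 := by
            linear_combination h4 - (S.sym u ϖ) * h
          apply hneg1
          rw [← hu2, hχ1]
          ring
      have hcu : GaussianInt.toComplex (S.sym u (ϖ ^ ℓ)) ≠ 1 := by
        rw [sym_pow S hp hpr]
        intro hone
        apply hχl
        apply GaussianInt.toComplex_inj.mp
        rw [hone, map_one]
      have h3 : (∑ x ∈ R, GaussianInt.toComplex (S.sym x (ϖ ^ ℓ)))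
          * (GaussianInt.toComplex (S.sym u (ϖ ^ ℓ)) - 1) = 0 := by
        linear_combination hscale
      rcases mul_eq_zero.mp h3 with h | h
      · exact h
      · exact absurd (by linear_combination h) hcu
    · -- ℓ ≥ k + 2 : additive character with denominator exponent ≥ 2
      have hge2 : k + 2 ≤ ℓ := by omega
      have hl0 : ℓ ≠ 0 := by omega
      have hlk1 : ℓ - k - 1 ≠ 0 := by omega
      obtain ⟨R, hR, _⟩ := rsExists (ϖ ^ ℓ) (pow_ne_zero ℓ hϖ0)
      rw [S.gauss_def (ϖ ^ k) (ϖ ^ ℓ) (hϖ2.pow_left) R hR]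
      obtain ⟨t₀, ht₀⟩ := exists_eK_ne_one hp hpr
      set F : GaussianInt → ℂ := fun x => GaussianInt.toComplex (S.sym x (ϖ ^ ℓ))
        * eK (GaussianInt.toComplex (ϖ ^ k * x) / GaussianInt.toComplex (ϖ ^ ℓ)) with hF
      have hf : ∀ x y : GaussianInt, ϖ ^ ℓ ∣ x - y → F x = F y := by
        intro x y hd
        obtain ⟨s, hs⟩ := hd
        have hxy : x = y + ϖ ^ ℓ * s := by linear_combination hs
        rw [hF]
        simp only
        rw [hxy]
        congr 1
        · have hdd : ϖ ∣ (y + ϖ ^ ℓ * s) - y := by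
            have he : (y + ϖ ^ ℓ * s) - y = ϖ ^ ℓ * s := by ring
            rw [he]
            exact (dvd_pow_self ϖ hl0).mul_right s
          rw [sym_pow S hp hpr, sym_pow S hp hpr, sym_congr S hp hpr hdd]
        · have he : ϖ ^ k * (y + ϖ ^ ℓ * s) = ϖ ^ k * y + ϖ ^ ℓ * (ϖ ^ k * s) := by ring
          rw [he, eK_div_add (ϖ ^ ℓ) _ _ (pow_ne_zero ℓ hϖ0)]
      have htr := rsSum_translate hR F hf (ϖ ^ (ℓ - k - 1) * t₀)
      have hstep : ∀ x : GaussianInt, F (x + ϖ ^ (ℓ - k - 1) * t₀)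
          = F x * eK (GaussianInt.toComplex t₀ / GaussianInt.toComplex ϖ) := by
        intro x
        rw [hF]
        simp only
        have hdd : ϖ ∣ (x + ϖ ^ (ℓ - k - 1) * t₀) - x := by
          have he : (x + ϖ ^ (ℓ - k - 1) * t₀) - x = ϖ ^ (ℓ - k - 1) * t₀ := by ring
          rw [he]
          exact (dvd_pow_self ϖ hlk1).mul_right t₀
        have hsym : S.sym (x + ϖ ^ (ℓ - k - 1) * t₀) (ϖ ^ ℓ) = S.sym x (ϖ ^ ℓ) := by
          rw [sym_pow S hp hpr, sym_pow S hp hpr, sym_congr S hp hpr hdd]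
        have hpow : ϖ ^ k * ϖ ^ (ℓ - k - 1) = ϖ ^ (ℓ - 1) := by
          rw [← pow_add]
          congr 1
          omega
        have heq : ϖ ^ k * (x + ϖ ^ (ℓ - k - 1) * t₀) = ϖ ^ k * x + ϖ ^ (ℓ - 1) * t₀ := by
          rw [mul_add, ← mul_assoc, hpow]
        have hden : eK (GaussianInt.toComplex (ϖ ^ (ℓ - 1) * t₀)
            / GaussianInt.toComplex (ϖ ^ ℓ))
            = eK (GaussianInt.toComplex t₀ / GaussianInt.toComplex ϖ) := by
          congr 1
          rw [map_mul, map_pow]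
          have hden2 : GaussianInt.toComplex (ϖ ^ ℓ)
              = GaussianInt.toComplex ϖ ^ (ℓ - 1) * GaussianInt.toComplex ϖ := by
            rw [map_pow, ← pow_succ]
            congr 1
            omega
          rw [hden2]
          exact mul_div_mul_left _ _ (pow_ne_zero _ hA0)
        rw [hsym, heq, map_add, add_div, eK_add, hden]
        ring
      rw [Finset.sum_congr rfl (fun x _ => hstep x), ← Finset.sum_mul] at htr
      have h3 : (∑ x ∈ R, F x)
          * (eK (GaussianInt.toComplex t₀ / GaussianInt.toComplex ϖ) - 1) = 0 := by
        linear_combination htr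
      rcases mul_eq_zero.mp h3 with h | h
      · exact h
      · exact absurd (by linear_combination h) ht₀
end
end

section
/- Two cusps κ = α/γ and κ' = α'/γ' of Γ₁(N) (written with (α,γ) = (α',γ') = 1) are equivalent under Γ₁(N) if and only if α ≡ α' (mod N) and γ ≡ γ' (mod N). -/
open scoped ComplexConjugate Classical

noncomputable section

lemma lam_irred : Irreducible (1 + iZ) := by
  constructor
  · intro h
    have := Zsqrtd.norm_eq_one_iff.2 h
    simp [Zsqrtd.norm, iZ, Zsqrtd.ext_iff] at this
  · intro a b hab
    have hn : a.norm.natAbs * b.norm.natAbs = 2 := by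
      rw [← Int.natAbs_mul, ← Zsqrtd.norm_mul, ← hab]
      simp [Zsqrtd.norm, iZ]
    have hd : a.norm.natAbs ∣ 2 := ⟨_, hn.symm⟩
    rcases (Nat.prime_two).eq_one_or_self_of_dvd _ hd with h | h
    · exact Or.inl (Zsqrtd.norm_eq_one_iff.1 h)
    · right
      apply Zsqrtd.norm_eq_one_iff.1
      rw [h] at hn
      omega

lemma lam_cube : (1 + iZ) ^ 3 = (⟨-2, 2⟩ : GaussianInt) := by
  have h : (1 + iZ) = (⟨1, 1⟩ : GaussianInt) := by
    simp [iZ, Zsqrtd.ext_iff]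
  rw [h]
  ext <;> simp [pow_succ, Zsqrtd.re_mul, Zsqrtd.im_mul]

lemma unit_eq_one (u : GaussianIntˣ) (h : (1 + iZ) ^ 3 ∣ (u : GaussianInt) - 1) :
    (u : GaussianInt) = 1 := by
  have hnorm : (u : GaussianInt).norm.natAbs = 1 := Zsqrtd.norm_eq_one_iff.2 u.isUnit
  have h0 : (u : GaussianInt).norm = (u : GaussianInt).re * (u : GaussianInt).re
      + (u : GaussianInt).im * (u : GaussianInt).im := by
    simp [Zsqrtd.norm]
  have hre : (u : GaussianInt).re * (u : GaussianInt).re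
      + (u : GaussianInt).im * (u : GaussianInt).im = 1 := by
    rcases Int.natAbs_eq_iff.mp hnorm with h' | h'
    · rw [h0] at h'; exact_mod_cast h'
    · exfalso
      rw [h0] at h'
      push_cast at h'
      nlinarith [mul_self_nonneg (u : GaussianInt).re, mul_self_nonneg (u : GaussianInt).im]
  rw [lam_cube] at h
  obtain ⟨k, hk⟩ := h
  have h1 := congrArg Zsqrtd.re hk
  have h2 := congrArg Zsqrtd.im hk
  simp [Zsqrtd.re_mul, Zsqrtd.im_mul] at h1 h2
  have hr1 : (u : GaussianInt).re ≤ 1 := by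
    nlinarith [mul_self_nonneg (u : GaussianInt).im, mul_self_nonneg ((u : GaussianInt).re - 1)]
  have hr2 : -1 ≤ (u : GaussianInt).re := by
    nlinarith [mul_self_nonneg (u : GaussianInt).im, mul_self_nonneg ((u : GaussianInt).re + 1)]
  have htri : (u : GaussianInt).re = -1 ∨ (u : GaussianInt).re = 0 ∨ (u : GaussianInt).re = 1 := by
    omega
  rcases htri with h' | h' | h'
  · exfalso
    have him : (u : GaussianInt).im * (u : GaussianInt).im = 0 := by nlinarith
    have him0 : (u : GaussianInt).im = 0 := mul_self_eq_zero.mp him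
    rw [h'] at h1; rw [him0] at h2; omega
  · exfalso
    rw [h'] at h1; omega
  · have him : (u : GaussianInt).im * (u : GaussianInt).im = 0 := by nlinarith
    have him0 : (u : GaussianInt).im = 0 := mul_self_eq_zero.mp him
    ext <;> simp [h', him0]

/-- Two cusps `κ = α/γ` and `κ' = α'/γ'` of `Γ₁(N)` (written with coprime pairs,
normalized so that the numerator is primary when it is coprime to `λ = 1+i`, and the
denominator is primary otherwise) are equivalent under `Γ₁(N)` if and only if
`α ≡ α' (mod N)` and `γ ≡ γ' (mod N)`. -/
theorem stmt19 (N α γ α' γ' : GaussianInt) (hN : (1 + iZ) ^ 4 ∣ N)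
    (hco : IsCoprime α γ) (hco' : IsCoprime α' γ')
    (hnorm₁ : IsCoprime α (1 + iZ) → IsPrimary α)
    (hnorm₂ : ¬ IsCoprime α (1 + iZ) → IsPrimary γ)
    (hnorm₁' : IsCoprime α' (1 + iZ) → IsPrimary α')
    (hnorm₂' : ¬ IsCoprime α' (1 + iZ) → IsPrimary γ') :
    (∃ g : Matrix (Fin 2) (Fin 2) GaussianInt,
        g.det = 1 ∧
        (∀ i j, N ∣ (g i j - (1 : Matrix (Fin 2) (Fin 2) GaussianInt) i j)) ∧
        ∃ u : GaussianIntˣ,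
          g 0 0 * α + g 0 1 * γ = (u : GaussianInt) * α' ∧
          g 1 0 * α + g 1 1 * γ = (u : GaussianInt) * γ') ↔
      (N ∣ α - α' ∧ N ∣ γ - γ') := by
  have hl1 : (1 + iZ) ∣ N := dvd_trans (dvd_pow_self _ (by norm_num)) hN
  have hl3 : (1 + iZ) ^ 3 ∣ N := dvd_trans (pow_dvd_pow _ (by norm_num)) hN
  constructor
  · rintro ⟨g, hdet, hcong, u, h1, h2⟩
    have e00 : N ∣ g 0 0 - 1 := by simpa [Matrix.one_apply] using hcong 0 0
    have e01 : N ∣ g 0 1 := by simpa [Matrix.one_apply] using hcong 0 1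
    have e10 : N ∣ g 1 0 := by simpa [Matrix.one_apply] using hcong 1 0
    have e11 : N ∣ g 1 1 - 1 := by simpa [Matrix.one_apply] using hcong 1 1
    have key1 : N ∣ (u : GaussianInt) * α' - α := by
      have h : (u : GaussianInt) * α' - α = (g 0 0 - 1) * α + g 0 1 * γ := by
        rw [← h1]; ring
      rw [h]
      exact dvd_add (e00.mul_right α) (e01.mul_right γ)
    have key2 : N ∣ (u : GaussianInt) * γ' - γ := by
      have h : (u : GaussianInt) * γ' - γ = g 1 0 * α + (g 1 1 - 1) * γ := by
        rw [← h2]; ring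
      rw [h]
      exact dvd_add (e10.mul_right α) (e11.mul_right γ)
    -- show u = 1
    have hu1 : (u : GaussianInt) = 1 := by
      apply unit_eq_one
      by_cases hA : IsCoprime α (1 + iZ)
      · -- α is primary; show α' is primary too
        obtain ⟨p, hp⟩ := hnorm₁ hA
        have hndvd : ¬ (1 + iZ) ∣ α := lam_irred.coprime_iff_not_dvd.1 hA.symm
        have hndvd' : ¬ (1 + iZ) ∣ α' := by
          intro hd
          apply hndvd
          have hd2 : (1 + iZ) ∣ (u : GaussianInt) * α' - α := dvd_trans hl1 key1
          have hd3 : (1 + iZ) ∣ (u : GaussianInt) * α' := hd.mul_left _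
          exact (dvd_sub_right hd3).mp hd2
        obtain ⟨p', hp'⟩ := hnorm₁' ((lam_irred.coprime_iff_not_dvd.2 hndvd').symm)
        obtain ⟨q, hq⟩ := dvd_trans hl3 key1
        exact ⟨q - (u : GaussianInt) * p' + p, by
          linear_combination hq - (u : GaussianInt) * hp' + hp⟩
      · -- λ ∣ α, so γ is primary; show γ' is primary too
        obtain ⟨p, hp⟩ := hnorm₂ hA
        have hd : (1 + iZ) ∣ α := by
          by_contra hnd
          exact hA ((lam_irred.coprime_iff_not_dvd.2 hnd).symm)
        have hd' : (1 + iZ) ∣ α' := by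
          have hd2 : (1 + iZ) ∣ (u : GaussianInt) * α' - α := dvd_trans hl1 key1
          have hd3 : (1 + iZ) ∣ (u : GaussianInt) * α' := by
            have : (u : GaussianInt) * α' = ((u : GaussianInt) * α' - α) + α := by ring
            rw [this]; exact dvd_add hd2 hd
          rw [mul_comm] at hd3
          exact (Units.dvd_mul_right).mp hd3
        have hA' : ¬ IsCoprime α' (1 + iZ) := by
          intro hc
          exact lam_irred.coprime_iff_not_dvd.1 hc.symm hd'
        obtain ⟨p', hp'⟩ := hnorm₂' hA'
        obtain ⟨q, hq⟩ := dvd_trans hl3 key2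
        exact ⟨q - (u : GaussianInt) * p' + p, by
          linear_combination hq - (u : GaussianInt) * hp' + hp⟩
    rw [hu1, one_mul] at key1 key2
    exact ⟨(dvd_sub_comm).mp key1, (dvd_sub_comm).mp key2⟩
  · rintro ⟨hα, hγ⟩
    obtain ⟨a, b, hab⟩ := hco
    obtain ⟨a', b', hab'⟩ := hco'
    refine ⟨Matrix.of
        ![![α' * (a - (a * b' - a' * b) * γ) + b' * γ,
            α' * (b + (a * b' - a' * b) * α) - b' * α],
          ![γ' * (a - (a * b' - a' * b) * γ) - a' * γ,
            γ' * (b + (a * b' - a' * b) * α) + a' * α]], ?_, ?_, 1, ?_, ?_⟩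
    · simp only [Matrix.det_fin_two, Matrix.of_apply, Matrix.cons_val', Matrix.cons_val_zero,
        Matrix.cons_val_one, Matrix.head_cons, Matrix.empty_val', Matrix.cons_val_fin_one,
        Matrix.head_fin_const]
      linear_combination (a * α + b * γ) * hab' + hab
    · obtain ⟨x, hx⟩ := hα
      obtain ⟨y, hy⟩ := hγ
      intro i j
      fin_cases i <;> fin_cases j <;>
        simp [Matrix.one_apply]
      · refine ⟨x * (b * γ * a' - (a - (a * b' - a' * b) * γ)) + y * (b * γ * b'), ?_⟩
        linear_combination (1 - b' * γ) * hab + b * γ * hab'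
          + (b * γ * a' - (a - (a * b' - a' * b) * γ)) * hx + (b * γ * b') * hy
      · refine ⟨x * (-(α' * b * a' + b')) + y * (-(α' * b * b')), ?_⟩
        linear_combination α' * b' * hab - α' * b * hab'
          + (-(α' * b * a' + b')) * hx + (-(α' * b * b')) * hy
      · refine ⟨x * (-(γ' * a * a')) + y * (-(γ' * a * b' + a')), ?_⟩
        linear_combination γ' * a' * hab - γ' * a * hab'
          + (-(γ' * a * a')) * hx + (-(γ' * a * b' + a')) * hy
      · refine ⟨x * (a' - γ' * b * a') + y * (-(γ' * b * b')), ?_⟩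
        linear_combination γ' * b' * hab + (1 - γ' * b) * hab'
          + (a' - γ' * b * a') * hx + (-(γ' * b * b')) * hy
    · simp only [Matrix.of_apply, Matrix.cons_val', Matrix.cons_val_zero, Matrix.cons_val_one,
        Matrix.head_cons, Matrix.empty_val', Matrix.cons_val_fin_one, Matrix.head_fin_const,
        Units.val_one, one_mul]
      linear_combination α' * hab
    · simp only [Matrix.of_apply, Matrix.cons_val', Matrix.cons_val_zero, Matrix.cons_val_one,
        Matrix.head_cons, Matrix.empty_val', Matrix.cons_val_fin_one, Matrix.head_fin_const,
        Units.val_one, one_mul]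
      linear_combination γ' * hab
end
end
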